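/- Let A and B be self-adjoint operators on a Hilbert space H, with A injective, and define T on D(B) ⊕ D(A⁻¹) ⊆ H ⊕ H by T(x, y) = (A⁻¹y, Bx). Then the adjoint of T is given by T*(x, y) = (By, A⁻¹x) on D(A⁻¹) ⊕ D(B). -/

import Mathlib

open LinearPMap

/-- The block operator matrix `[[0, S],[R, 0]]`, i.e. `T(x, y) = (S y, R x)`,
with domain `D(R) ⊕ D(S)` in the Hilbert space direct sum `H ⊕ H`. -/
noncomputable def blockOp {H : Type*} [NormedAddCommGroup H] [InnerProductSpace ℂ H]
    (S R : H →ₗ.[ℂ] H) : WithLp 2 (H × H) →ₗ.[ℂ] WithLp 2 (H × H) where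
  domain :=
  { carrier := {z | (WithLp.equiv 2 (H × H) z).1 ∈ R.domain ∧
      (WithLp.equiv 2 (H × H) z).2 ∈ S.domain}
    add_mem' := fun ha hb => ⟨Submodule.add_mem _ ha.1 hb.1, Submodule.add_mem _ ha.2 hb.2⟩
    zero_mem' := ⟨Submodule.zero_mem _, Submodule.zero_mem _⟩
    smul_mem' := fun c _ hz => ⟨Submodule.smul_mem _ c hz.1, Submodule.smul_mem _ c hz.2⟩ }
  toFun :=
  { toFun := fun z => (WithLp.equiv 2 (H × H)).symm
      (S ⟨(WithLp.equiv 2 (H × H) z.1).2, z.2.2⟩, R ⟨(WithLp.equiv 2 (H × H) z.1).1, z.2.1⟩)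
    map_add' := fun z w => congrArg (WithLp.equiv 2 (H × H)).symm
      (Prod.ext (S.map_add ⟨_, z.2.2⟩ ⟨_, w.2.2⟩) (R.map_add ⟨_, z.2.1⟩ ⟨_, w.2.1⟩))
    map_smul' := fun c z => congrArg (WithLp.equiv 2 (H × H)).symm
      (Prod.ext (S.map_smul c ⟨_, z.2.2⟩) (R.map_smul c ⟨_, z.2.1⟩)) }

local notation "⟪" x ", " y "⟫" => @inner ℂ _ _ x y

private lemma selfAdjoint_mem_and_apply {H : Type*} [NormedAddCommGroup H]
    [InnerProductSpace ℂ H] [CompleteSpace H] {B : H →ₗ.[ℂ] H}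
    (hB : IsSelfAdjoint B) {v w : H}
    (h : ∀ x : B.domain, ⟪w, (x : H)⟫ = ⟪v, B x⟫) :
    ∃ hv : v ∈ B.domain, B ⟨v, hv⟩ = w := by
  have hd : Dense (B.domain : Set H) := hB.dense_domain
  rw [LinearPMap.isSelfAdjoint_def] at hB
  rw [← hB]
  have hv : v ∈ B†.domain := mem_adjoint_domain_of_exists v ⟨w, h⟩
  exact ⟨hv, adjoint_apply_eq hd ⟨v, hv⟩ h⟩

private lemma selfAdjoint_symm' {H : Type*} [NormedAddCommGroup H]
    [InnerProductSpace ℂ H] [CompleteSpace H] {B : H →ₗ.[ℂ] H}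
    (hB : IsSelfAdjoint B) :
    ∀ x y : B.domain, ⟪B x, (y : H)⟫ = ⟪(x : H), B y⟫ := by
  have hd : Dense (B.domain : Set H) := hB.dense_domain
  have h := adjoint_isFormalAdjoint (T := B) hd
  rw [LinearPMap.isSelfAdjoint_def] at hB
  rw [hB] at h
  exact h

private lemma blockOp_dense {H : Type*} [NormedAddCommGroup H]
    [InnerProductSpace ℂ H] {S R : H →ₗ.[ℂ] H}
    (hR : Dense (R.domain : Set H)) (hS : Dense (S.domain : Set H)) :
    Dense ((blockOp S R).domain : Set (WithLp 2 (H × H))) := by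
  set e := (WithLp.prodContinuousLinearEquiv 2 ℂ H H).toHomeomorph with he
  have h1 : Dense ((R.domain : Set H) ×ˢ (S.domain : Set H)) := hR.prod hS
  have h2 : ((blockOp S R).domain : Set (WithLp 2 (H × H)))
      = e ⁻¹' ((R.domain : Set H) ×ˢ (S.domain : Set H)) := by
    ext z
    exact Iff.rfl
  rw [h2, ← Homeomorph.image_symm]
  exact e.symm.isDenseEmbedding.dense_image.mpr h1

/-- The adjoint of the block operator `T = [[0, A⁻¹],[B, 0]]` is `[[0, B],[A⁻¹, 0]]`. -/
theorem adjoint_blockOp_inverse {H : Type*} [NormedAddCommGroup H]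
    [InnerProductSpace ℂ H] [CompleteSpace H] (A B : H →ₗ.[ℂ] H)
    (hA : IsSelfAdjoint A) (hB : IsSelfAdjoint B)
    (hAinj : Function.Injective (A.toFun : A.domain → H)) :
    (blockOp A.inverse B)† = blockOp B A.inverse := by
  have hker : LinearMap.ker A.toFun = ⊥ := LinearMap.ker_eq_bot.mpr hAinj
  have hBd : Dense (B.domain : Set H) := hB.dense_domain
  have hAsym := selfAdjoint_symm' hA
  have hBsym := selfAdjoint_symm' hB
  have hmemInv : ∀ x : A.domain, A x ∈ A.inverse.domain := fun x =>
    A.inverse_domain ▸ ⟨x, rfl⟩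
  have hinv : ∀ x : A.domain, A.inverse ⟨A x, hmemInv x⟩ = x := fun x =>
    inverse_apply_eq hker rfl
  have hInvDense : Dense (A.inverse.domain : Set H) := by
    rw [Submodule.dense_iff_topologicalClosure_eq_top,
      Submodule.topologicalClosure_eq_top_iff, Submodule.eq_bot_iff]
    intro u hu
    have h0 : ∀ x : A.domain, ⟪(0 : H), (x : H)⟫ = ⟪u, A x⟫ := by
      intro x
      have h1 : ⟪A x, u⟫ = 0 := (Submodule.mem_orthogonal _ u).mp hu (A x) (hmemInv x)
      rw [inner_zero_left, eq_comm, inner_eq_zero_symm]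
      exact h1
    obtain ⟨hu', hAu⟩ := selfAdjoint_mem_and_apply hA h0
    have hz : (⟨u, hu'⟩ : A.domain) = 0 := hAinj (by rw [A.toFun.map_zero]; exact hAu)
    simpa using congrArg Subtype.val hz
  have hTd : Dense ((blockOp A.inverse B).domain : Set (WithLp 2 (H × H))) :=
    blockOp_dense hBd hInvDense
  have hInvSym : ∀ u v : A.inverse.domain,
      ⟪A.inverse u, (v : H)⟫ = ⟪(u : H), A.inverse v⟫ := by
    intro u v
    obtain ⟨a, ha⟩ : (u : H) ∈ LinearMap.range A.toFun := A.inverse_domain ▸ u.2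
    obtain ⟨b, hb⟩ : (v : H) ∈ LinearMap.range A.toFun := A.inverse_domain ▸ v.2
    have hu : A.inverse u = a := inverse_apply_eq hker ha
    have hv2 : A.inverse v = b := inverse_apply_eq hker hb
    rw [hu, hv2, ← ha, ← hb]
    exact (hAsym a b).symm
  have hform : (blockOp A.inverse B).IsFormalAdjoint (blockOp B A.inverse) := by
    intro x y
    rw [WithLp.prod_inner_apply, WithLp.prod_inner_apply]
    show ⟪A.inverse ⟨(x : WithLp 2 (H × H)).ofLp.2, x.2.2⟩, (y : WithLp 2 (H × H)).ofLp.1⟫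
        + ⟪B ⟨(x : WithLp 2 (H × H)).ofLp.1, x.2.1⟩, (y : WithLp 2 (H × H)).ofLp.2⟫
      = ⟪(x : WithLp 2 (H × H)).ofLp.1, B ⟨(y : WithLp 2 (H × H)).ofLp.2, y.2.2⟩⟫
        + ⟪(x : WithLp 2 (H × H)).ofLp.2, A.inverse ⟨(y : WithLp 2 (H × H)).ofLp.1, y.2.1⟩⟫
    have g1 : ⟪A.inverse ⟨(x : WithLp 2 (H × H)).ofLp.2, x.2.2⟩, (y : WithLp 2 (H × H)).ofLp.1⟫
        = ⟪(x : WithLp 2 (H × H)).ofLp.2, A.inverse ⟨(y : WithLp 2 (H × H)).ofLp.1, y.2.1⟩⟫ :=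
      hInvSym ⟨(x : WithLp 2 (H × H)).ofLp.2, x.2.2⟩ ⟨(y : WithLp 2 (H × H)).ofLp.1, y.2.1⟩
    have g2 : ⟪B ⟨(x : WithLp 2 (H × H)).ofLp.1, x.2.1⟩, (y : WithLp 2 (H × H)).ofLp.2⟫
        = ⟪(x : WithLp 2 (H × H)).ofLp.1, B ⟨(y : WithLp 2 (H × H)).ofLp.2, y.2.2⟩⟫ :=
      hBsym ⟨(x : WithLp 2 (H × H)).ofLp.1, x.2.1⟩ ⟨(y : WithLp 2 (H × H)).ofLp.2, y.2.2⟩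
    rw [g1, g2, add_comm]
  have hle1 : blockOp B A.inverse ≤ (blockOp A.inverse B)† := hform.le_adjoint hTd
  have hfa := adjoint_isFormalAdjoint (T := blockOp A.inverse B) hTd
  have hdom : ((blockOp A.inverse B)†).domain ≤ (blockOp B A.inverse).domain := by
    intro zv hz
    set z : ((blockOp A.inverse B)†).domain := ⟨zv, hz⟩ with hzdef
    set w := (blockOp A.inverse B)† z with hw
    -- the second component of `z` lies in `D(B)` and `B` maps it to `w.ofLp.1`
    have hBfact : ∀ x : B.domain, ⟪w.ofLp.1, (x : H)⟫ = ⟪(z : WithLp 2 (H × H)).ofLp.2, B x⟫ := by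
      intro x
      have hmem : ((WithLp.equiv 2 (H × H)).symm ((x : H), (0 : H)))
          ∈ (blockOp A.inverse B).domain := ⟨x.2, Submodule.zero_mem _⟩
      have h := hfa z ⟨_, hmem⟩
      have c1 : (blockOp A.inverse B) ⟨(WithLp.equiv 2 (H × H)).symm ((x : H), (0 : H)), hmem⟩
          = (WithLp.equiv 2 (H × H)).symm ((0 : H), B x) :=
        congrArg (WithLp.equiv 2 (H × H)).symm
          (Prod.ext (LinearPMap.map_zero A.inverse) rfl)
      rw [c1] at h
      have h' : ⟪w.ofLp.1, (x : H)⟫ + ⟪w.ofLp.2, (0 : H)⟫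
          = ⟪(z : WithLp 2 (H × H)).ofLp.1, (0 : H)⟫ + ⟪(z : WithLp 2 (H × H)).ofLp.2, B x⟫ := h
      rw [inner_zero_right, inner_zero_right, add_zero, zero_add] at h'
      exact h'
    -- `w.ofLp.2` lies in `D(A)` and `A` maps it to the first component of `z`
    have hAfact : ∀ a : A.domain, ⟪(z : WithLp 2 (H × H)).ofLp.1, (a : H)⟫ = ⟪w.ofLp.2, A a⟫ := by
      intro a
      have hmem : ((WithLp.equiv 2 (H × H)).symm ((0 : H), A a))
          ∈ (blockOp A.inverse B).domain := ⟨Submodule.zero_mem _, hmemInv a⟩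
      have h := hfa z ⟨_, hmem⟩
      have c1 : (blockOp A.inverse B) ⟨(WithLp.equiv 2 (H × H)).symm ((0 : H), A a), hmem⟩
          = (WithLp.equiv 2 (H × H)).symm ((a : H), (0 : H)) :=
        congrArg (WithLp.equiv 2 (H × H)).symm
          (Prod.ext (hinv a) (LinearPMap.map_zero B))
      rw [c1] at h
      have h' : ⟪w.ofLp.1, (0 : H)⟫ + ⟪w.ofLp.2, A a⟫
          = ⟪(z : WithLp 2 (H × H)).ofLp.1, (a : H)⟫ + ⟪(z : WithLp 2 (H × H)).ofLp.2, (0 : H)⟫ := h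
      rw [inner_zero_right, inner_zero_right, zero_add, add_zero] at h'
      exact h'.symm
    obtain ⟨hw2, hAw⟩ := selfAdjoint_mem_and_apply hA hAfact
    obtain ⟨hz2, -⟩ := selfAdjoint_mem_and_apply hB hBfact
    have h1 : (z : WithLp 2 (H × H)).ofLp.1 ∈ A.inverse.domain := by
      rw [A.inverse_domain]
      exact ⟨⟨w.ofLp.2, hw2⟩, hAw⟩
    exact ⟨h1, hz2⟩
  exact (eq_of_le_of_domain_eq hle1 (le_antisymm hle1.1 hdom)).symm
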